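/- In the braid group B_n, the Birman–Ko–Lee elements σ_{ij} satisfy σ_{rt}σ_{st} = σ_{rs}σ_{rt} for all 1 ≤ r < s < t ≤ n. -/

import Mathlib

/-- The descending product `σ_{j-2} σ_{j-3} ⋯ σ_i` (empty product when `j = i+1`). -/
def artinChain {G : Type*} [Group G] (σ : ℕ → G) (i j : ℕ) : G :=
  (((List.range' i (j - 1 - i)).reverse).map σ).prod

/-- The Birman–Ko–Lee band generator `σ_{ij} = (σ_{j-2}⋯σ_i)⁻¹ σ_{j-1} (σ_{j-2}⋯σ_i)`. -/
def bkl {G : Type*} [Group G] (σ : ℕ → G) (i j : ℕ) : G :=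
  (artinChain σ i j)⁻¹ * σ (j - 1) * artinChain σ i j

/-- The Artin braid relations for the generators `σ_1, …, σ_{n-1}`. -/
def BraidRels {G : Type*} [Group G] (σ : ℕ → G) (n : ℕ) : Prop :=
  (∀ i, 1 ≤ i → i + 1 ≤ n - 1 →
      σ i * σ (i + 1) * σ i = σ (i + 1) * σ i * σ (i + 1)) ∧
  (∀ i j, 1 ≤ i → i ≤ n - 1 → 1 ≤ j → j ≤ n - 1 → i + 1 < j →
      σ i * σ j = σ j * σ i)

section Aux

variable {G : Type*} [Group G] (σ : ℕ → G)

lemma artinChain_eq (i k : ℕ) :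
    artinChain σ i (i + k + 1) = ((List.range' i k).reverse.map σ).prod := by
  have h : i + k + 1 - 1 - i = k := by omega
  rw [artinChain, h]

lemma artinChain_succ (i k : ℕ) :
    artinChain σ i (i + k + 2) = σ (i + k) * artinChain σ i (i + k + 1) := by
  rw [show i + k + 2 = i + (k + 1) + 1 from by omega, artinChain_eq σ i (k + 1),
      artinChain_eq σ i k]
  rw [List.range'_concat]
  simp [List.reverse_append]

lemma artinChain_split (r a b : ℕ) :
    artinChain σ r (r + (a + b + 1) + 1) =
      artinChain σ (r + a + 1) ((r + a + 1) + b + 1) *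
        artinChain σ r (r + (a + 1) + 1) := by
  rw [artinChain_eq σ r (a + b + 1), artinChain_eq σ (r + a + 1) b,
      artinChain_eq σ r (a + 1),
      show a + b + 1 = b + (a + 1) from by omega,
      Nat.add_comm b (a + 1), ← List.range'_append_1 (s := r) (m := a + 1) (n := b)]
  rw [List.reverse_append, List.map_append, List.prod_append,
      show r + (a + 1) = r + a + 1 from by omega]

lemma commute_artinChain (g : G) (i k : ℕ)
    (hg : ∀ x, i ≤ x → x < i + k → Commute g (σ x)) :
    Commute g (artinChain σ i (i + k + 1)) := by
  rw [artinChain_eq σ i k]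
  apply Commute.list_prod_right
  intro x hx
  simp only [List.mem_map, List.mem_reverse, List.mem_range'_1] at hx
  obtain ⟨y, ⟨hy1, hy2⟩, rfl⟩ := hx
  exact hg y hy1 hy2

/-- The key lemma: `bkl σ s t` equals the ascending conjugate
`(σ_{t-1}⋯σ_{s+1}) σ_s (σ_{t-1}⋯σ_{s+1})⁻¹`. -/
lemma bkl_key (n : ℕ) (h : BraidRels σ n) :
    ∀ b s, 1 ≤ s → s + b + 1 ≤ n →
      (artinChain σ s (s + b + 1))⁻¹ * σ (s + b) * artinChain σ s (s + b + 1)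
        = artinChain σ (s + 1) (s + b + 2) * σ s *
            (artinChain σ (s + 1) (s + b + 2))⁻¹ := by
  intro b
  induction b with
  | zero =>
    intro s hs hn
    have h1 : artinChain σ s (s + 0 + 1) = 1 := by rw [artinChain_eq σ s 0]; simp
    have h2 : artinChain σ (s + 1) (s + 0 + 2) = 1 := by
      rw [show s + 0 + 2 = (s + 1) + 0 + 1 from by omega, artinChain_eq σ (s + 1) 0]; simp
    rw [h1, h2]; group
  | succ b ih =>
    intro s hs hn
    have hC : artinChain σ s (s + (b + 1) + 1) = σ (s + b) * artinChain σ s (s + b + 1) := by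
      rw [show s + (b + 1) + 1 = s + b + 2 from by omega]
      exact artinChain_succ σ s b
    have hD : artinChain σ (s + 1) (s + (b + 1) + 2)
        = σ (s + b + 1) * artinChain σ (s + 1) (s + b + 2) := by
      have h0 := artinChain_succ σ (s + 1) b
      rw [show s + (b + 1) + 2 = (s + 1) + b + 2 from by omega,
          show s + b + 2 = (s + 1) + b + 1 from by omega,
          show s + b + 1 = (s + 1) + b from by omega]
      exact h0
    have hbr : σ (s + b) * σ (s + b + 1) * σ (s + b)
        = σ (s + b + 1) * σ (s + b) * σ (s + b + 1) := by
      have := h.1 (s + b) (by omega) (by omega)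
      rwa [show (s + b) + 1 = s + b + 1 from rfl] at this
    have hcomm : Commute (σ (s + b + 1)) (artinChain σ s (s + b + 1)) := by
      apply commute_artinChain
      intro x hx1 hx2
      exact (show Commute (σ x) (σ (s + b + 1)) from
        h.2 x (s + b + 1) (by omega) (by omega) (by omega) (by omega) (by omega)).symm
    set C := artinChain σ s (s + b + 1) with hCdef
    set D := artinChain σ (s + 1) (s + b + 2) with hDdef
    have specIH : C⁻¹ * σ (s + b) * C = D * σ s * D⁻¹ := ih s hs (by omega)
    have ha : (σ (s + b))⁻¹ * σ (s + b + 1) * σ (s + b)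
        = σ (s + b + 1) * σ (s + b) * (σ (s + b + 1))⁻¹ := by
      apply mul_left_cancel (a := σ (s + b))
      rw [show σ (s + b) * (σ (s + b + 1) * σ (s + b) * (σ (s + b + 1))⁻¹)
            = (σ (s + b) * σ (s + b + 1) * σ (s + b)) * (σ (s + b + 1))⁻¹ from by group, hbr]
      group
    have hc1 : C⁻¹ * σ (s + b + 1) = σ (s + b + 1) * C⁻¹ := (hcomm.inv_right.eq).symm
    have hc2 : (σ (s + b + 1))⁻¹ * C = C * (σ (s + b + 1))⁻¹ := hcomm.inv_left.eq
    rw [hC, hD, show s + (b + 1) = s + b + 1 from by omega]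
    calc (σ (s + b) * C)⁻¹ * σ (s + b + 1) * (σ (s + b) * C)
        = C⁻¹ * ((σ (s + b))⁻¹ * σ (s + b + 1) * σ (s + b)) * C := by group
      _ = C⁻¹ * (σ (s + b + 1) * σ (s + b) * (σ (s + b + 1))⁻¹) * C := by rw [ha]
      _ = (C⁻¹ * σ (s + b + 1)) * σ (s + b) * ((σ (s + b + 1))⁻¹ * C) := by group
      _ = (σ (s + b + 1) * C⁻¹) * σ (s + b) * (C * (σ (s + b + 1))⁻¹) := by rw [hc1, hc2]
      _ = σ (s + b + 1) * (C⁻¹ * σ (s + b) * C) * (σ (s + b + 1))⁻¹ := by group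
      _ = σ (s + b + 1) * (D * σ s * D⁻¹) * (σ (s + b + 1))⁻¹ := by rw [specIH]
      _ = σ (s + b + 1) * D * σ s * (σ (s + b + 1) * D)⁻¹ := by group

lemma band_abstract {G : Type*} [Group G] (P u e c : G)
    (h1 : (P⁻¹ * u * P) * e * (P⁻¹ * u * P) = e * (P⁻¹ * u * P) * e)
    (h2 : c * (P⁻¹ * u * P) = (P⁻¹ * u * P) * c) :
    (P * (e * c))⁻¹ * u * (P * (e * c)) * (P⁻¹ * u * P)
      = (c⁻¹ * e * c) * ((P * (e * c))⁻¹ * u * (P * (e * c))) := by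
  set X := P⁻¹ * u * P with hX
  have e1 : (P * (e * c))⁻¹ * u * (P * (e * c)) = (e * c)⁻¹ * X * (e * c) := by
    rw [hX]; group
  rw [e1]
  calc (e * c)⁻¹ * X * (e * c) * X
      = c⁻¹ * e⁻¹ * X * e * (c * X) := by group
    _ = c⁻¹ * e⁻¹ * X * e * (X * c) := by rw [h2]
    _ = c⁻¹ * (e⁻¹ * (X * e * X)) * c := by group
    _ = c⁻¹ * (e⁻¹ * (e * X * e)) * c := by rw [h1]
    _ = c⁻¹ * X * e * c := by group
    _ = (c⁻¹ * e * c) * ((e * c)⁻¹ * X * (e * c)) := by group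

end Aux

/-- In the braid group `B_n`, the BKL elements satisfy
`σ_{rt} σ_{st} = σ_{rs} σ_{rt}` for all `1 ≤ r < s < t ≤ n`. -/
theorem bkl_band_relation_right {G : Type*} [Group G] (n : ℕ) (σ : ℕ → G)
    (h : BraidRels σ n) :
    ∀ r s t, 1 ≤ r → r < s → s < t → t ≤ n →
      bkl σ r t * bkl σ s t = bkl σ r s * bkl σ r t := by
  intro r s t hr hrs hst htn
  obtain ⟨a, rfl⟩ : ∃ a, s = r + a + 1 := ⟨s - r - 1, by omega⟩
  obtain ⟨b, rfl⟩ : ∃ b, t = r + a + b + 2 := ⟨t - (r + a + 1) - 1, by omega⟩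
  have hkey := bkl_key σ n h b (r + a + 1) (by omega) (by omega)
  rw [show (r + a + 1) + b + 1 = r + a + b + 2 from by omega,
      show (r + a + 1) + b + 2 = r + a + b + 3 from by omega,
      show (r + a + 1) + 1 = r + a + 2 from by omega,
      show (r + a + 1) + b = r + a + b + 1 from by omega] at hkey
  set C := artinChain σ (r + a + 1) (r + a + b + 2) with hCdef
  set D := artinChain σ (r + a + 2) (r + a + b + 3) with hDdef
  set c := artinChain σ r (r + a + 1) with hcdef
  -- splitting of the long chain
  have hsplit : artinChain σ r (r + a + b + 2) = C * (σ (r + a) * c) := by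
    have h1 := artinChain_split σ r a b
    rw [show r + (a + b + 1) + 1 = r + a + b + 2 from by omega,
        show (r + a + 1) + b + 1 = r + a + b + 2 from by omega,
        show r + (a + 1) + 1 = r + a + 2 from by omega] at h1
    rw [h1, artinChain_succ σ r a]
  -- commutation facts
  have hcD : Commute (σ (r + a)) D := by
    rw [hDdef, show r + a + b + 3 = (r + a + 2) + b + 1 from by omega]
    apply commute_artinChain
    intro x hx1 hx2
    exact show Commute (σ (r + a)) (σ x) from
      h.2 (r + a) x (by omega) (by omega) (by omega) (by omega) (by omega)
  have hcv : Commute (σ (r + a + 1)) c := by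
    rw [hcdef, show r + a + 1 = r + a + 1 from rfl]
    exact commute_artinChain σ (σ (r + a + 1)) r a (fun x hx1 hx2 =>
      (show Commute (σ x) (σ (r + a + 1)) from
        h.2 x (r + a + 1) (by omega) (by omega) (by omega) (by omega) (by omega)).symm)
  have hcDc : Commute c D := by
    rw [hDdef, show r + a + b + 3 = (r + a + 2) + b + 1 from by omega]
    apply commute_artinChain
    intro y hy1 hy2
    rw [hcdef]
    exact (commute_artinChain σ (σ y) r a (fun x hx1 hx2 =>
      (show Commute (σ x) (σ y) from
        h.2 x y (by omega) (by omega) (by omega) (by omega) (by omega)).symm)).symm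
  -- braid relation needed for X = D σ_s D⁻¹
  have hbr2 : σ (r + a) * σ (r + a + 1) * σ (r + a)
      = σ (r + a + 1) * σ (r + a) * σ (r + a + 1) := by
    have := h.1 (r + a) (by omega) (by omega)
    rwa [show (r + a) + 1 = r + a + 1 from rfl] at this
  -- derive the two hypotheses for band_abstract
  have h1 : (C⁻¹ * σ (r + a + b + 1) * C) * σ (r + a) * (C⁻¹ * σ (r + a + b + 1) * C)
      = σ (r + a) * (C⁻¹ * σ (r + a + b + 1) * C) * σ (r + a) := by
    rw [hkey]
    calc (D * σ (r + a + 1) * D⁻¹) * σ (r + a) * (D * σ (r + a + 1) * D⁻¹)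
        = D * σ (r + a + 1) * (D⁻¹ * (σ (r + a) * D)) * σ (r + a + 1) * D⁻¹ := by group
      _ = D * σ (r + a + 1) * (D⁻¹ * (D * σ (r + a))) * σ (r + a + 1) * D⁻¹ := by
          rw [hcD.eq]
      _ = D * (σ (r + a + 1) * σ (r + a) * σ (r + a + 1)) * D⁻¹ := by group
      _ = D * (σ (r + a) * σ (r + a + 1) * σ (r + a)) * D⁻¹ := by rw [← hbr2]
      _ = (D * σ (r + a)) * σ (r + a + 1) * ((σ (r + a) * D⁻¹)) := by group
      _ = (σ (r + a) * D) * σ (r + a + 1) * (D⁻¹ * σ (r + a)) := by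
          rw [← hcD.eq, hcD.inv_right.eq]
      _ = σ (r + a) * (D * σ (r + a + 1) * D⁻¹) * σ (r + a) := by group
  have h2 : c * (C⁻¹ * σ (r + a + b + 1) * C) = (C⁻¹ * σ (r + a + b + 1) * C) * c := by
    rw [hkey]
    exact ((hcDc.mul_right hcv.symm).mul_right hcDc.inv_right).eq
  -- now assemble
  simp only [bkl]
  rw [show r + a + b + 2 - 1 = r + a + b + 1 from rfl,
      show r + a + 1 - 1 = r + a from rfl]
  rw [hsplit]
  exact band_abstract C (σ (r + a + b + 1)) (σ (r + a)) c h1 h2
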